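/- Let F(x) = ∏_{i=1}^{k} (x−x_i)^{m_i} with real numbers x₁ < x₂ < ⋯ < x_k, positive integer multiplicities m₁, …, m_k, and m₁ + ⋯ + m_k = d ≥ 2. Fix an index j and a real u with 0 < u < min_{1 ≤ i ≤ k−1}(x_{i+1} − x_i), and let G be the polynomial obtained from F by replacing the root x_j by x_j + u (keeping all multiplicities and the order of the roots). Let ξ₁ ≤ ⋯ ≤ ξ_{d−1} and η₁ ≤ ⋯ ≤ η_{d−1} be the roots, counted with multiplicity, of F′ and G′ respectively. Then ξ_i ≤ η_i for every i = 1, …, d−1 (every root of the derivative is shifted to the right), and the sum of all the shifts satisfies Σ_{i=1}^{d−1} (η_i − ξ_i) = (d−1)·m_j·u/d. -/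
import Mathlib

open Polynomial

namespace ShiftAux

lemma chain_lt {n : ℕ} {f : ℕ → ℝ} (h : ∀ i, i + 1 < n → f i < f (i + 1)) :
    ∀ a b, a < b → b < n → f a < f b := by
  intro a b hab hb
  induction b with
  | zero => omega
  | succ b ih =>
    rcases Nat.lt_succ_iff_lt_or_eq.mp hab with h' | h'
    · exact lt_trans (ih h' (by omega)) (h b hb)
    · subst h'; exact h a hb

lemma chain_le {n : ℕ} {f : ℕ → ℝ} (h : ∀ i, i + 1 < n → f i ≤ f (i + 1)) :
    ∀ a b, a ≤ b → b < n → f a ≤ f b := by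
  intro a b hab hb
  induction b with
  | zero => have : a = 0 := by omega
            subst this; rfl
  | succ b ih =>
    rcases Nat.lt_succ_iff_lt_or_eq.mp (Nat.lt_succ_of_le hab) with h' | h'
    · exact le_trans (ih (by omega) (by omega)) (h b hb)
    · subst h'; rfl

/-- the polynomial `∑ i, m i * ∏_{l ≠ i} (X - x l)`. -/
noncomputable def Q (k : ℕ) (m : ℕ → ℕ) (x : ℕ → ℝ) : ℝ[X] :=
  ∑ i ∈ Finset.range k, Polynomial.C (m i : ℝ) * ∏ l ∈ (Finset.range k).erase i, (X - C (x l))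

lemma evalQ (k : ℕ) (m : ℕ → ℕ) (x : ℕ → ℝ) (t : ℝ) :
    eval t (Q k m x) = ∑ i ∈ Finset.range k, (m i : ℝ) *
      ∏ l ∈ (Finset.range k).erase i, (t - x l) := by
  simp [Q, eval_finset_sum, eval_prod]

lemma derivative_finset_prod {ι : Type} [DecidableEq ι] (s : Finset ι) (f : ι → ℝ[X]) :
    derivative (∏ b ∈ s, f b) = ∑ b ∈ s, (∏ a ∈ s.erase b, f a) * derivative (f b) := by
  rw [Finset.prod_eq_multiset_prod, derivative_prod]
  simp only [← Finset.erase_val, ← Finset.prod_eq_multiset_prod, ← Finset.sum_eq_multiset_sum]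

lemma deriv_fact (k : ℕ) (m : ℕ → ℕ) (hm : ∀ i, i < k → 0 < m i) (x : ℕ → ℝ) :
    derivative (∏ i ∈ Finset.range k, (X - C (x i)) ^ m i) =
      (∏ i ∈ Finset.range k, (X - C (x i)) ^ (m i - 1)) * Q k m x := by
  rw [derivative_finset_prod, Q, Finset.mul_sum]
  refine Finset.sum_congr rfl fun i hi => ?_
  rw [derivative_pow, derivative_X_sub_C, mul_one]
  have h1 : ∀ l ∈ (Finset.range k).erase i,
      (X - C (x l)) ^ m l = (X - C (x l)) ^ (m l - 1) * (X - C (x l)) := by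
    intro l hl
    have h0 : 0 < m l := hm l (Finset.mem_range.mp (Finset.mem_of_mem_erase hl))
    conv_lhs => rw [← Nat.sub_add_cancel h0]
    rw [pow_succ]
  rw [Finset.prod_congr rfl h1, Finset.prod_mul_distrib]
  have h2 : (∏ l ∈ (Finset.range k).erase i, (X - C (x l)) ^ (m l - 1)) * (X - C (x i)) ^ (m i - 1)
      = ∏ l ∈ Finset.range k, (X - C (x l)) ^ (m l - 1) :=
    Finset.prod_erase_mul _ _ hi
  rw [← h2]; ring

lemma toPoly {k d : ℕ} {x ξ : ℕ → ℝ} {m : ℕ → ℕ}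
    (h : ∀ t : ℝ, deriv (fun s : ℝ => ∏ i ∈ Finset.range k, (s - x i) ^ m i) t
      = d * ∏ i ∈ Finset.range (d - 1), (t - ξ i)) :
    derivative (∏ i ∈ Finset.range k, (X - C (x i)) ^ m i) =
      C (d : ℝ) * ∏ i ∈ Finset.range (d - 1), (X - C (ξ i)) := by
  apply Polynomial.funext
  intro t
  have hfun : (fun s : ℝ => ∏ i ∈ Finset.range k, (s - x i) ^ m i)
      = fun s => eval s (∏ i ∈ Finset.range k, (X - C (x i)) ^ m i) := by
    funext s; simp [eval_prod]
  have ht := h t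
  rw [hfun] at ht
  rw [← Polynomial.deriv, ht]
  simp [eval_prod]



/-- sign of a product whose factors below index `r` are positive and above are negative -/
lemma sign_prod_split (s : Finset ℕ) (f : ℕ → ℝ) (r : ℕ)
    (h : ∀ l ∈ s, (l ≤ r → 0 < f l) ∧ (r < l → f l < 0)) :
    0 < (-1 : ℝ) ^ (s.filter (fun l => r < l)).card * ∏ l ∈ s, f l := by
  classical
  induction s using Finset.induction_on with
  | empty => simp
  | @insert a s ha ih =>
    have hfa := h a (Finset.mem_insert_self a s)
    have ih' := ih (fun l hl => h l (Finset.mem_insert_of_mem hl))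
    rw [Finset.filter_insert, Finset.prod_insert ha]
    by_cases hra : r < a
    · rw [if_pos hra, Finset.card_insert_of_notMem (by simp [ha])]
      have h2 : f a < 0 := hfa.2 hra
      rw [pow_succ]
      nlinarith
    · rw [if_neg hra]
      have h2 : 0 < f a := hfa.1 (by omega)
      nlinarith

lemma sign_prod_split_nonneg (s : Finset ℕ) (f : ℕ → ℝ) (r : ℕ)
    (h : ∀ l ∈ s, (l ≤ r → 0 ≤ f l) ∧ (r < l → f l < 0)) :
    0 ≤ (-1 : ℝ) ^ (s.filter (fun l => r < l)).card * ∏ l ∈ s, f l := by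
  classical
  induction s using Finset.induction_on with
  | empty => simp
  | @insert a s ha ih =>
    have hfa := h a (Finset.mem_insert_self a s)
    have ih' := ih (fun l hl => h l (Finset.mem_insert_of_mem hl))
    rw [Finset.filter_insert, Finset.prod_insert ha]
    by_cases hra : r < a
    · rw [if_pos hra, Finset.card_insert_of_notMem (by simp [ha])]
      have h2 : f a < 0 := hfa.2 hra
      rw [pow_succ]
      nlinarith
    · rw [if_neg hra]
      have h2 : 0 ≤ f a := hfa.1 (by omega)
      nlinarith

lemma filter_range_card (k r : ℕ) :
    ((Finset.range k).filter (fun l => r < l)).card = k - 1 - r := by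
  have : (Finset.range k).filter (fun l => r < l) = Finset.Ico (r+1) k := by
    ext l; simp [Finset.mem_filter, Finset.mem_range, Finset.mem_Ico]; omega
  rw [this, Nat.card_Ico]; omega

lemma filter_erase_card (k r : ℕ) (hr : r < k) :
    (((Finset.range k).erase r).filter (fun l => r < l)).card = k - 1 - r := by
  have : ((Finset.range k).erase r).filter (fun l => r < l) = Finset.Ico (r+1) k := by
    ext l; simp [Finset.mem_filter, Finset.mem_erase, Finset.mem_range, Finset.mem_Ico]; omega
  rw [this, Nat.card_Ico]; omega




lemma Q_coeff {k d : ℕ} (hk : 0 < k) {m : ℕ → ℕ} (x : ℕ → ℝ)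
    (hsum : ∑ i ∈ Finset.range k, m i = d) :
    (Q k m x).coeff (k - 1) = d := by
  rw [Q, finset_sum_coeff]
  have h1 : ∀ i ∈ Finset.range k,
      (C ((m i : ℝ)) * ∏ l ∈ (Finset.range k).erase i, (X - C (x l))).coeff (k-1) = (m i : ℝ) := by
    intro i hi
    have hmon : (∏ l ∈ (Finset.range k).erase i, (X - C (x l))).Monic :=
      monic_prod_of_monic _ _ (fun l _ => monic_X_sub_C (x l))
    have hdeg : (∏ l ∈ (Finset.range k).erase i, (X - C (x l))).natDegree = k - 1 := by
      rw [natDegree_prod _ _ (fun l _ => X_sub_C_ne_zero (x l))]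
      simp [natDegree_X_sub_C, Finset.card_erase_of_mem hi]
    rw [coeff_C_mul, ← hdeg, hmon.coeff_natDegree, mul_one]
  rw [Finset.sum_congr rfl h1, ← Nat.cast_sum, hsum]

lemma Q_natDegree_le (k : ℕ) (m : ℕ → ℕ) (x : ℕ → ℝ) :
    (Q k m x).natDegree ≤ k - 1 := by
  apply natDegree_sum_le_of_forall_le
  intro i hi
  apply le_trans (natDegree_C_mul_le _ _)
  have hdeg : (∏ l ∈ (Finset.range k).erase i, (X - C (x l))).natDegree = k - 1 := by
    rw [natDegree_prod _ _ (fun l _ => X_sub_C_ne_zero (x l))]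
    simp [natDegree_X_sub_C, Finset.card_erase_of_mem hi]
  rw [hdeg]

lemma Q_natDegree {k d : ℕ} (hk : 0 < k) (hd : 0 < d) {m : ℕ → ℕ} (x : ℕ → ℝ)
    (hsum : ∑ i ∈ Finset.range k, m i = d) :
    (Q k m x).natDegree = k - 1 := by
  refine le_antisymm (Q_natDegree_le k m x) (le_natDegree_of_ne_zero ?_)
  rw [Q_coeff hk x hsum]
  exact_mod_cast hd.ne'

lemma Q_ne_zero {k d : ℕ} (hk : 0 < k) (hd : 0 < d) {m : ℕ → ℕ} (x : ℕ → ℝ)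
    (hsum : ∑ i ∈ Finset.range k, m i = d) : Q k m x ≠ 0 := by
  intro h
  have := Q_coeff hk x hsum
  rw [h] at this
  have h2 : (d:ℝ) = 0 := by simpa using this.symm
  have : d = 0 := by exact_mod_cast h2
  omega

lemma Q_leadingCoeff {k d : ℕ} (hk : 0 < k) (hd : 0 < d) {m : ℕ → ℕ} (x : ℕ → ℝ)
    (hsum : ∑ i ∈ Finset.range k, m i = d) :
    (Q k m x).leadingCoeff = d := by
  rw [leadingCoeff, Q_natDegree hk hd x hsum, Q_coeff hk x hsum]



lemma Q_sign_at {k : ℕ} {x : ℕ → ℝ} (hx : ∀ i, i+1<k → x i < x (i+1))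
    {m : ℕ → ℕ} (hm : ∀ i, i < k → 0 < m i) (r : ℕ) (hr : r < k) :
    0 < (-1:ℝ)^(k-1-r) * eval (x r) (Q k m x) := by
  have hev : eval (x r) (Q k m x) = (m r : ℝ) * ∏ l ∈ (Finset.range k).erase r, (x r - x l) := by
    rw [evalQ]
    rw [Finset.sum_eq_single_of_mem r (Finset.mem_range.mpr hr)]
    intro i hi hne
    have hri : r ∈ (Finset.range k).erase i :=
      Finset.mem_erase.mpr ⟨Ne.symm hne, Finset.mem_range.mpr hr⟩
    rw [Finset.prod_eq_zero hri (by ring), mul_zero]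
  rw [hev, ← filter_erase_card k r hr]
  have harg : ∀ l ∈ (Finset.range k).erase r,
      (l ≤ r → 0 < x r - x l) ∧ (r < l → x r - x l < 0) := by
    intro l hl
    obtain ⟨hlr, hlk⟩ := Finset.mem_erase.mp hl
    refine ⟨fun hlle => ?_, fun hrl => ?_⟩
    · have : l < r := lt_of_le_of_ne hlle hlr
      have := chain_lt hx l r this hr
      simpa using sub_pos.mpr this
    · have := chain_lt hx r l hrl (Finset.mem_range.mp hlk)
      simpa using sub_neg.mpr this
  have key := sign_prod_split ((Finset.range k).erase r) (fun l => x r - x l) r harg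
  have hmr : (0:ℝ) < m r := by exact_mod_cast hm r hr
  nlinarith [key]

lemma Q_roots {k d : ℕ} (hk : 0 < k) (hd : 0 < d) {x : ℕ → ℝ}
    (hx : ∀ i, i+1<k → x i < x (i+1))
    {m : ℕ → ℕ} (hm : ∀ i, i < k → 0 < m i)
    (hsum : ∑ i ∈ Finset.range k, m i = d) :
    ∃ y : ℕ → ℝ,
      (∀ r, r + 1 < k → x r < y r ∧ y r < x (r+1) ∧ eval (y r) (Q k m x) = 0) ∧
      Q k m x = C (d:ℝ) * ∏ r ∈ Finset.range (k-1), (X - C (y r)) := by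
  have hroot : ∀ r, r + 1 < k → ∃ c, (x r < c ∧ c < x (r+1)) ∧ eval c (Q k m x) = 0 := by
    intro r hr
    have h1 := Q_sign_at (k:=k) hx hm r (by omega)
    have h2 := Q_sign_at (k:=k) hx hm (r+1) hr
    have he : k - 1 - r = (k - 1 - (r+1)) + 1 := by omega
    rw [he, pow_succ] at h1
    have hxr := hx r hr
    have hcont := (Q k m x).continuousOn (s := Set.Icc (x r) (x (r+1)))
    rcases Nat.even_or_odd (k - 1 - (r+1)) with hp | hp
    · rw [hp.neg_one_pow] at h1 h2
      have hneg : eval (x r) (Q k m x) < 0 := by nlinarith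
      have hpos : 0 < eval (x (r+1)) (Q k m x) := by nlinarith
      obtain ⟨c, hc, hc0⟩ := intermediate_value_Ioo (le_of_lt hxr) hcont ⟨hneg, hpos⟩
      exact ⟨c, ⟨hc.1, hc.2⟩, hc0⟩
    · rw [hp.neg_one_pow] at h1 h2
      have hpos : 0 < eval (x r) (Q k m x) := by nlinarith
      have hneg : eval (x (r+1)) (Q k m x) < 0 := by nlinarith
      obtain ⟨c, hc, hc0⟩ := intermediate_value_Ioo' (le_of_lt hxr) hcont ⟨hneg, hpos⟩
      exact ⟨c, ⟨hc.1, hc.2⟩, hc0⟩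
  choose! y hy using hroot
  have hymono : ∀ a b, a < b → b + 1 < k → y a < y b := by
    intro a b hab hb
    have ha := hy a (by omega)
    have hb' := hy b hb
    have hle : x (a+1) ≤ x b := by
      rcases eq_or_lt_of_le (Nat.succ_le_of_lt hab) with h' | h'
      · exact le_of_eq (congrArg x h')
      · exact le_of_lt (chain_lt hx (a+1) b h' (by omega))
    linarith [ha.1.2, hb'.1.1]
  set N : Multiset ℝ := Multiset.map y (Finset.range (k-1)).val with hN
  have hNd : N.Nodup := by
    refine Multiset.Nodup.map_on ?_ (Finset.range (k-1)).nodup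
    intro a ha b hb hab
    have ha' : a < k - 1 := by simpa using ha
    have hb' : b < k - 1 := by simpa using hb
    by_contra hne
    rcases lt_or_gt_of_ne hne with h' | h'
    · exact absurd hab (ne_of_lt (hymono a b h' (by omega)))
    · exact absurd hab.symm (ne_of_lt (hymono b a h' (by omega)))
  have hQne : Q k m x ≠ 0 := Q_ne_zero hk hd x hsum
  have hsub : N ≤ (Q k m x).roots := by
    rw [Multiset.le_iff_subset hNd]
    intro a ha
    obtain ⟨r, hr, rfl⟩ := Multiset.mem_map.mp ha
    have hr' : r < k - 1 := by simpa using hr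
    rw [mem_roots hQne]
    exact (hy r (by omega)).2
  have hcard : Multiset.card N = k - 1 := by simp [hN]
  have hcard2 : Multiset.card (Q k m x).roots ≤ k - 1 := by
    have h0 := (Q k m x).card_roots'
    rwa [Q_natDegree hk hd x hsum] at h0
  have hNeq : N = (Q k m x).roots :=
    Multiset.eq_of_le_of_card_le hsub (by rw [hcard]; exact hcard2)
  have hfac := C_leadingCoeff_mul_prod_multiset_X_sub_C (p := Q k m x)
    (by rw [← hNeq, hcard, Q_natDegree hk hd x hsum])
  refine ⟨y, fun r hr => ⟨(hy r hr).1.1, (hy r hr).1.2, (hy r hr).2⟩, ?_⟩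
  rw [← hfac, Q_leadingCoeff hk hd x hsum, ← hNeq, hN]
  congr 1
  rw [Multiset.map_map, Finset.prod_eq_multiset_prod]
  rfl


lemma roots_eq {k d : ℕ} (hk : 0 < k) (hd : 0 < d) {x ξ y : ℕ → ℝ} {m : ℕ → ℕ}
    (hm : ∀ i, i < k → 0 < m i)
    (hQ : Q k m x = C (d:ℝ) * ∏ r ∈ Finset.range (k-1), (X - C (y r)))
    (hpoly : derivative (∏ i ∈ Finset.range k, (X - C (x i)) ^ m i) =
      C (d : ℝ) * ∏ i ∈ Finset.range (d - 1), (X - C (ξ i))) :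
    Multiset.map ξ (Finset.range (d-1)).val =
      ((Finset.range k).val.bind fun i => Multiset.replicate (m i - 1) (x i)) +
        Multiset.map y (Finset.range (k-1)).val := by
  have hfact := deriv_fact k m hm x
  rw [hpoly, hQ] at hfact
  have hdne : (C (d:ℝ)) ≠ 0 := by
    simp only [ne_eq, C_eq_zero, Nat.cast_eq_zero]
    omega
  have hP : (∏ i ∈ Finset.range (d - 1), (X - C (ξ i))) =
      (∏ i ∈ Finset.range k, (X - C (x i)) ^ (m i - 1)) *
        ∏ r ∈ Finset.range (k-1), (X - C (y r)) := by
    apply mul_left_cancel₀ hdne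
    rw [hfact]; ring
  have hlhs : (∏ i ∈ Finset.range (d - 1), (X - C (ξ i))).roots =
      Multiset.map ξ (Finset.range (d-1)).val := by
    have : (∏ i ∈ Finset.range (d - 1), (X - C (ξ i))) =
        (Multiset.map (fun a => X - C a) (Multiset.map ξ (Finset.range (d-1)).val)).prod := by
      rw [Multiset.map_map, Finset.prod_eq_multiset_prod]; rfl
    rw [this, roots_multiset_prod_X_sub_C]
  have hm1 : (∏ i ∈ Finset.range k, (X - C (x i)) ^ (m i - 1)) ≠ 0 :=
    (monic_prod_of_monic _ _ (fun i _ => (monic_X_sub_C (x i)).pow _)).ne_zero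
  have hm2 : (∏ r ∈ Finset.range (k-1), (X - C (y r))) ≠ 0 :=
    (monic_prod_of_monic _ _ (fun i _ => monic_X_sub_C (y i))).ne_zero
  have hr1 : (∏ i ∈ Finset.range k, (X - C (x i)) ^ (m i - 1)).roots =
      (Finset.range k).val.bind fun i => Multiset.replicate (m i - 1) (x i) := by
    rw [roots_prod _ _ hm1]
    congr 1
    funext i
    rw [roots_pow, roots_X_sub_C, Multiset.nsmul_singleton]
  have hr2 : (∏ r ∈ Finset.range (k-1), (X - C (y r))).roots =
      Multiset.map y (Finset.range (k-1)).val := by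
    have : (∏ r ∈ Finset.range (k-1), (X - C (y r))) =
        (Multiset.map (fun a => X - C a) (Multiset.map y (Finset.range (k-1)).val)).prod := by
      rw [Multiset.map_map, Finset.prod_eq_multiset_prod]; rfl
    rw [this, roots_multiset_prod_X_sub_C]
  rw [← hlhs, hP, roots_mul (mul_ne_zero hm1 hm2), hr1, hr2]


lemma q_update {k : ℕ} (m : ℕ → ℕ) (x : ℕ → ℝ) {j : ℕ} (hj : j < k) (u t : ℝ) :
    (t - x j) * (eval t (Q k m x) - eval t (Q k m (Function.update x j (x j + u)))) =
      u * (eval t (Q k m x) - (m j : ℝ) * ∏ l ∈ (Finset.range k).erase j, (t - x l)) := by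
  set x' := Function.update x j (x j + u) with hx'
  have hx'j : x' j = x j + u := Function.update_self j _ x
  have hx'l : ∀ l, l ≠ j → x' l = x l := fun l hl => Function.update_of_ne hl _ x
  rw [evalQ, evalQ]
  rw [← Finset.sum_sub_distrib, Finset.mul_sum]
  have hterm : ∀ i ∈ Finset.range k,
      (t - x j) * ((m i : ℝ) * ∏ l ∈ (Finset.range k).erase i, (t - x l) -
        (m i : ℝ) * ∏ l ∈ (Finset.range k).erase i, (t - x' l)) =
      if i = j then 0 else u * ((m i : ℝ) * ∏ l ∈ (Finset.range k).erase i, (t - x l)) := by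
    intro i hi
    by_cases hij : i = j
    · subst hij
      rw [if_pos rfl]
      have : ∀ l ∈ (Finset.range k).erase i, (t - x' l) = (t - x l) := by
        intro l hl
        rw [hx'l l (Finset.mem_erase.mp hl).1]
      rw [Finset.prod_congr rfl this]
      ring
    · rw [if_neg hij]
      have hjmem : j ∈ (Finset.range k).erase i :=
        Finset.mem_erase.mpr ⟨Ne.symm hij, Finset.mem_range.mpr hj⟩
      have hA : ∏ l ∈ (Finset.range k).erase i, (t - x l) =
          (t - x j) * ∏ l ∈ ((Finset.range k).erase i).erase j, (t - x l) :=
        (Finset.mul_prod_erase _ _ hjmem).symm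
      have hB : ∏ l ∈ (Finset.range k).erase i, (t - x' l) =
          (t - x j - u) * ∏ l ∈ ((Finset.range k).erase i).erase j, (t - x l) := by
        rw [← Finset.mul_prod_erase _ _ hjmem, hx'j]
        have : ∀ l ∈ ((Finset.range k).erase i).erase j, (t - x' l) = (t - x l) := by
          intro l hl
          rw [hx'l l (Finset.mem_erase.mp hl).1]
        rw [Finset.prod_congr rfl this]
        ring_nf
      rw [hA, hB]
      ring
  rw [Finset.sum_congr rfl hterm]
  have h1 : (∑ i ∈ Finset.range k, if i = j then (0:ℝ) else
        u * ((m i : ℝ) * ∏ l ∈ (Finset.range k).erase i, (t - x l)))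
      = ∑ i ∈ (Finset.range k).erase j,
          u * ((m i : ℝ) * ∏ l ∈ (Finset.range k).erase i, (t - x l)) := by
    rw [← Finset.sum_erase (Finset.range k)
      (f := fun i => if i = j then (0:ℝ) else
        u * ((m i : ℝ) * ∏ l ∈ (Finset.range k).erase i, (t - x l))) (a := j) (by simp)]
    refine Finset.sum_congr rfl fun i hi => ?_
    rw [if_neg (Finset.mem_erase.mp hi).1]
  rw [h1, ← Finset.mul_sum]
  have h2 := Finset.sum_erase_add (Finset.range k)
    (fun i => (m i:ℝ) * ∏ l ∈ (Finset.range k).erase i, (t - x l)) (Finset.mem_range.mpr hj)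
  rw [← h2]
  ring


lemma count_le {ι : Type} (s : Multiset ι) (f g : ι → ℝ) (t : ℝ) :
    (∀ a ∈ s, f a ≤ g a) →
      Multiset.card ((s.map g).filter (· ≤ t)) ≤ Multiset.card ((s.map f).filter (· ≤ t)) := by
  induction s using Multiset.induction_on with
  | empty => simp
  | @cons a s ih =>
    intro h
    have ha := h a (Multiset.mem_cons_self a s)
    have ih' := ih (fun b hb => h b (Multiset.mem_cons_of_mem hb))
    rw [Multiset.map_cons, Multiset.map_cons, Multiset.filter_cons, Multiset.filter_cons,
      Multiset.card_add, Multiset.card_add]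
    refine add_le_add ?_ ih'
    split_ifs with h1 h2
    · simp
    · exact absurd (le_trans ha h1) h2
    · simp
    · simp

lemma sum_roots {k d : ℕ} (hk : 0 < k) (hd : 2 ≤ d) {x ξ : ℕ → ℝ} {m : ℕ → ℕ}
    (hm : ∀ i, i < k → 0 < m i) (hsum : ∑ i ∈ Finset.range k, m i = d)
    (hpoly : derivative (∏ i ∈ Finset.range k, (X - C (x i)) ^ m i) =
      C (d : ℝ) * ∏ i ∈ Finset.range (d - 1), (X - C (ξ i))) :
    (d : ℝ) * ∑ i ∈ Finset.range (d-1), ξ i =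
      ((d : ℝ) - 1) * ∑ i ∈ Finset.range k, (m i : ℝ) * x i := by
  set F := ∏ i ∈ Finset.range k, (X - C (x i)) ^ m i with hF
  set P := ∏ i ∈ Finset.range (d - 1), (X - C (ξ i)) with hP
  have hFdeg : F.natDegree = d := by
    rw [hF, natDegree_prod _ _ (fun i _ => pow_ne_zero _ (X_sub_C_ne_zero (x i)))]
    simp only [natDegree_pow, natDegree_X_sub_C, mul_one]
    exact hsum
  have hFmon : F.Monic := monic_prod_of_monic _ _ (fun i _ => (monic_X_sub_C (x i)).pow _)
  have hFnext : F.nextCoeff = -∑ i ∈ Finset.range k, (m i : ℝ) * x i := by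
    rw [hF, Monic.nextCoeff_prod _ _ (fun i _ => (monic_X_sub_C (x i)).pow _)]
    rw [← Finset.sum_neg_distrib]
    refine Finset.sum_congr rfl fun i _ => ?_
    rw [Monic.nextCoeff_pow (monic_X_sub_C (x i)) _, nextCoeff_X_sub_C]
    simp [nsmul_eq_mul]
  have hPdeg : P.natDegree = d - 1 := by
    rw [hP, natDegree_prod _ _ (fun i _ => X_sub_C_ne_zero (ξ i))]
    simp [natDegree_X_sub_C]
  have hPnext : P.nextCoeff = -∑ i ∈ Finset.range (d-1), ξ i := by
    rw [hP, Monic.nextCoeff_prod _ _ (fun i _ => monic_X_sub_C (ξ i))]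
    simp [nextCoeff_X_sub_C]
  have hc : (derivative F).coeff (d - 2) = (C (d:ℝ) * P).coeff (d - 2) := by rw [hpoly]
  rw [coeff_derivative, coeff_C_mul] at hc
  have e1 : d - 2 + 1 = d - 1 := by omega
  rw [e1] at hc
  have e2 : F.coeff (d - 1) = -∑ i ∈ Finset.range k, (m i : ℝ) * x i := by
    rw [← hFnext, nextCoeff_of_natDegree_pos (by omega : 0 < F.natDegree), hFdeg]
  have e3 : P.coeff (d - 2) = -∑ i ∈ Finset.range (d-1), ξ i := by
    rw [← hPnext, nextCoeff_of_natDegree_pos (by rw [hPdeg]; omega), hPdeg]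
    congr 1
  rw [e2, e3] at hc
  have e4 : ((d - 2 : ℕ) : ℝ) + 1 = (d : ℝ) - 1 := by
    have : (2:ℕ) ≤ d := hd
    push_cast [Nat.cast_sub this]
    ring
  rw [e4] at hc
  linarith [hc]


lemma count_ge_lower {n i : ℕ} (f : ℕ → ℝ) (t : ℝ) (hi : i < n)
    (hmono : ∀ a, a ≤ i → f a ≤ t) :
    i + 1 ≤ Multiset.card
      (Multiset.filter (fun b => b ≤ t) (Multiset.map f (Finset.range n).val)) := by
  rw [Multiset.filter_map, Multiset.card_map]
  have hsub : (Finset.range (i+1)).val ≤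
      Multiset.filter ((· ≤ t) ∘ f) (Finset.range n).val := by
    rw [Multiset.le_iff_subset (Finset.range (i+1)).nodup]
    intro a ha
    have ha' : a < i + 1 := by
      have hor : a = i ∨ a < i := by simpa using ha
      omega
    rw [Multiset.mem_filter]
    exact ⟨by simp only [Finset.mem_val, Finset.mem_range]; omega, hmono a (by omega)⟩
  have hc := Multiset.card_le_card hsub
  simpa using hc

lemma count_le_upper {n i : ℕ} (f : ℕ → ℝ) (t : ℝ)
    (h : ∀ a, i ≤ a → a < n → ¬ (f a ≤ t)) :
    Multiset.card
      (Multiset.filter (fun b => b ≤ t) (Multiset.map f (Finset.range n).val)) ≤ i := by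
  rw [Multiset.filter_map, Multiset.card_map]
  have hsub : Multiset.filter ((· ≤ t) ∘ f) (Finset.range n).val ≤ (Finset.range i).val := by
    rw [Multiset.le_iff_subset (Multiset.Nodup.filter _ (Finset.range n).nodup)]
    intro a ha
    rw [Multiset.mem_filter] at ha
    have h1 : a < n := by simpa using ha.1
    simp only [Finset.mem_val, Finset.mem_range]
    by_contra h2
    push_neg at h2
    exact h a h2 h1 ha.2
  have hc := Multiset.card_le_card hsub
  simpa using hc

end ShiftAux

section MainThm
open Polynomial ShiftAux

set_option maxHeartbeats 1000000 in
/-- Shifting one root of a hyperbolic polynomial `F(x) = ∏ (x - x i)^(m i)` to the right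
by `u` (smaller than the minimal gap between consecutive roots) shifts every root of the
derivative to the right, and the sum of all the shifts equals `(d-1)·m j·u/d`. -/
theorem shift_root_shifts_critical_points
    (k d : ℕ) (hk : 0 < k) (hd : 2 ≤ d)
    (x : ℕ → ℝ) (hx : ∀ i, i + 1 < k → x i < x (i + 1))
    (m : ℕ → ℕ) (hm : ∀ i, i < k → 0 < m i)
    (hsum : ∑ i ∈ Finset.range k, m i = d)
    (j : ℕ) (hj : j < k)
    (u : ℝ) (hu : 0 < u) (hugap : ∀ i, i + 1 < k → u < x (i + 1) - x i)
    (ξ η : ℕ → ℝ)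
    (hξmono : ∀ i, i + 1 < d - 1 → ξ i ≤ ξ (i + 1))
    (hηmono : ∀ i, i + 1 < d - 1 → η i ≤ η (i + 1))
    (hξ : ∀ t : ℝ,
      deriv (fun s : ℝ => ∏ i ∈ Finset.range k, (s - x i) ^ m i) t
        = d * ∏ i ∈ Finset.range (d - 1), (t - ξ i))
    (hη : ∀ t : ℝ,
      deriv (fun s : ℝ =>
        ∏ i ∈ Finset.range k, (s - Function.update x j (x j + u) i) ^ m i) t
        = d * ∏ i ∈ Finset.range (d - 1), (t - η i)) :
    (∀ i, i < d - 1 → ξ i ≤ η i) ∧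
      ∑ i ∈ Finset.range (d - 1), (η i - ξ i) = ((d : ℝ) - 1) * (m j : ℝ) * u / d := by
  classical
  set x' : ℕ → ℝ := Function.update x j (x j + u) with hx'def
  have hx'j : x' j = x j + u := Function.update_self _ _ _
  have hx'l : ∀ l, l ≠ j → x' l = x l := fun l hl => Function.update_of_ne hl _ _
  have hxle : ∀ i, x i ≤ x' i := by
    intro i
    by_cases h : i = j
    · subst h; rw [hx'j]; linarith
    · rw [hx'l i h]
  have hx'step : ∀ i, i + 1 < k → x' i < x' (i + 1) := by
    intro i hi
    by_cases h1 : i = j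
    · subst h1
      rw [hx'j, hx'l (i+1) (by omega)]
      have := hugap i hi
      linarith
    · by_cases h2 : i + 1 = j
      · rw [hx'l i h1]
        subst h2
        rw [hx'j]
        have := hx i hi
        linarith
      · rw [hx'l i h1, hx'l _ h2]
        exact hx i hi
  have hd0 : 0 < d := by omega
  have hd' : (0:ℝ) < d := by exact_mod_cast hd0
  have hpξ := ShiftAux.toPoly (d := d) hξ
  have hpη := ShiftAux.toPoly (d := d) hη
  obtain ⟨y, hy, hQy⟩ := ShiftAux.Q_roots hk hd0 hx hm hsum
  obtain ⟨z, hz, hQz⟩ := ShiftAux.Q_roots hk hd0 hx'step hm hsum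
  have hMξ := ShiftAux.roots_eq hk hd0 hm hQy hpξ
  have hMη := ShiftAux.roots_eq hk hd0 hm hQz hpη
  -- the key comparison of interior critical points
  have hyz : ∀ r, r + 1 < k → y r ≤ z r := by
    intro r hr
    by_contra hcon
    push_neg at hcon
    obtain ⟨hw1, hw2, hw0⟩ := hy r hr
    obtain ⟨hz1, hz2, _⟩ := hz r hr
    set w := y r with hw
    have hwx' : x' r < w := lt_trans hz1 hcon
    have hlow : ∀ l, l ≤ r → l < k → x l < w := by
      intro l hle hl
      rcases eq_or_lt_of_le hle with rfl | h'
      · exact hw1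
      · exact lt_trans (chain_lt hx l r h' (by omega)) hw1
    have hhigh : ∀ l, r < l → l < k → w < x l := by
      intro l hlt hl
      rcases eq_or_lt_of_le (Nat.succ_le_of_lt hlt) with h' | h'
      · rw [← h']; exact hw2
      · exact lt_trans hw2 (chain_lt hx (r+1) l h' hl)
    have hWpos : 0 < (-1:ℝ)^(k-1-r) * ∏ l ∈ Finset.range k, (w - x l) := by
      rw [← ShiftAux.filter_range_card k r]
      apply ShiftAux.sign_prod_split
      intro l hl
      have hlk := Finset.mem_range.mp hl
      exact ⟨fun h => sub_pos.mpr (hlow l h hlk), fun h => sub_neg.mpr (hhigh l h hlk)⟩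
    have hid := ShiftAux.q_update m x hj u w
    rw [← hx'def, hw0] at hid
    have hid2 : (w - x j) * eval w (ShiftAux.Q k m x') =
        u * ((m j : ℝ) * ∏ l ∈ (Finset.range k).erase j, (w - x l)) := by
      linear_combination -hid
    have hprod : (w - x j) * ∏ l ∈ (Finset.range k).erase j, (w - x l)
        = ∏ l ∈ Finset.range k, (w - x l) :=
      Finset.mul_prod_erase (Finset.range k) (fun l => w - x l) (Finset.mem_range.mpr hj)
    have hW : (w - x j)^2 * eval w (ShiftAux.Q k m x')
        = u * (m j : ℝ) * ∏ l ∈ Finset.range k, (w - x l) := by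
      linear_combination (w - x j) * hid2 + u * (m j : ℝ) * hprod
    have hmj : (0:ℝ) < m j := by exact_mod_cast hm j hj
    have hwj2 : 0 < (w - x j)^2 := by
      have hne : w - x j ≠ 0 := sub_ne_zero.mpr (by
        rcases le_or_gt j r with h | h
        · exact ne_of_gt (hlow j h hj)
        · exact ne_of_lt (hhigh j h hj))
      positivity
    have h5 : (w - x j)^2 * ((-1:ℝ)^(k-1-r) * eval w (ShiftAux.Q k m x'))
        = u * (m j : ℝ) * ((-1:ℝ)^(k-1-r) * ∏ l ∈ Finset.range k, (w - x l)) := by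
      linear_combination (-1:ℝ)^(k-1-r) * hW
    have h6 : 0 < (w - x j)^2 * ((-1:ℝ)^(k-1-r) * eval w (ShiftAux.Q k m x')) := by
      rw [h5]
      exact mul_pos (mul_pos hu hmj) hWpos
    have hQ'pos : 0 < (-1:ℝ)^(k-1-r) * eval w (ShiftAux.Q k m x') := by
      nlinarith [h6, hwj2]
    -- now derive the opposite sign from the factorization of Q for x'
    have hzsign : ∀ s ∈ Finset.range (k-1),
        (s ≤ r → 0 ≤ w - z s) ∧ (r < s → w - z s < 0) := by
      intro s hs
      have hs' : s < k - 1 := Finset.mem_range.mp hs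
      obtain ⟨hzs1, hzs2, _⟩ := hz s (by omega)
      constructor
      · intro hsr
        rcases eq_or_lt_of_le hsr with rfl | h'
        · linarith
        · have hle : x' (s+1) ≤ x' r := by
            rcases eq_or_lt_of_le (Nat.succ_le_of_lt h') with h'' | h''
            · exact le_of_eq (congrArg x' h'')
            · exact le_of_lt (chain_lt hx'step (s+1) r h'' (by omega))
          linarith
      · intro hrs
        have hle : x' (r+1) ≤ x' s := by
          rcases eq_or_lt_of_le (Nat.succ_le_of_lt hrs) with h'' | h''
          · exact le_of_eq (congrArg x' h'')
          · exact le_of_lt (chain_lt hx'step (r+1) s h'' (by omega))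
        have : w < x' (r+1) := lt_of_lt_of_le hw2 (hxle (r+1))
        linarith
    have hsplitz := ShiftAux.sign_prod_split_nonneg (Finset.range (k-1)) (fun s => w - z s) r hzsign
    have hcardz : ((Finset.range (k-1)).filter (fun l => r < l)).card = k - 1 - (r+1) := by
      rw [ShiftAux.filter_range_card (k-1) r]
      omega
    rw [hcardz] at hsplitz
    have hevz : eval w (ShiftAux.Q k m x') = (d:ℝ) * ∏ s ∈ Finset.range (k-1), (w - z s) := by
      rw [hQz]
      simp [eval_prod]
    have hnonneg : 0 ≤ (-1:ℝ)^(k-1-(r+1)) * eval w (ShiftAux.Q k m x') := by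
      rw [hevz]
      nlinarith [hsplitz, hd']
    have he : k - 1 - r = (k - 1 - (r+1)) + 1 := by omega
    rw [he, pow_succ] at hQ'pos
    nlinarith [hQ'pos, hnonneg]
  -- counting argument
  set I : Multiset (ℕ ⊕ ℕ) :=
    ((Finset.range k).val.bind fun i => Multiset.replicate (m i - 1) (Sum.inl i)) +
      Multiset.map Sum.inr (Finset.range (k-1)).val with hI
  have hmapF : Multiset.map (Sum.elim x y) I = Multiset.map ξ (Finset.range (d-1)).val := by
    rw [hMξ, hI, Multiset.map_add, Multiset.map_bind]
    congr 1
    · congr 1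
      funext i
      rw [Multiset.map_replicate]
      rfl
    · rw [Multiset.map_map]
      rfl
  have hmapG : Multiset.map (Sum.elim x' z) I = Multiset.map η (Finset.range (d-1)).val := by
    rw [hMη, hI, Multiset.map_add, Multiset.map_bind]
    congr 1
    · congr 1
      funext i
      rw [Multiset.map_replicate]
      rfl
    · rw [Multiset.map_map]
      rfl
  have hcount : ∀ t : ℝ,
      Multiset.card ((Multiset.map η (Finset.range (d-1)).val).filter (fun b => b ≤ t)) ≤
        Multiset.card ((Multiset.map ξ (Finset.range (d-1)).val).filter (fun b => b ≤ t)) := by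
    intro t
    rw [← hmapF, ← hmapG]
    apply ShiftAux.count_le
    intro a ha
    rcases a with i | r
    · simpa using hxle i
    · have hr : r < k - 1 := by
        rw [hI, Multiset.mem_add] at ha
        rcases ha with ha | ha
        · exfalso
          obtain ⟨i, hi, hmem⟩ := Multiset.mem_bind.mp ha
          have := Multiset.eq_of_mem_replicate hmem
          simp at this
        · obtain ⟨a, ha', haa⟩ := Multiset.mem_map.mp ha
          have : a = r := by simpa using haa
          subst this
          simpa using ha'
      simpa using hyz r (by omega)
  have hpoint : ∀ i, i < d - 1 → ξ i ≤ η i := by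
    intro i hi
    by_contra hcon
    push_neg at hcon
    have hc := hcount (η i)
    have hA := ShiftAux.count_ge_lower (n := d-1) η (η i) hi
      (fun a ha => chain_le hηmono a i ha hi)
    have hB := ShiftAux.count_le_upper (n := d-1) (i := i) ξ (η i)
      (fun a ha1 ha2 hle => absurd (lt_of_le_of_lt hle hcon)
        (not_lt.mpr (chain_le hξmono i a ha1 ha2)))
    omega
  refine ⟨hpoint, ?_⟩
  -- the sum identity
  have hs1 := ShiftAux.sum_roots hk hd hm hsum hpξ
  have hs2 := ShiftAux.sum_roots hk hd hm hsum hpη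
  have hSum2 : ∑ i ∈ Finset.range k, (m i : ℝ) * x' i
      = (∑ i ∈ Finset.range k, (m i : ℝ) * x i) + (m j : ℝ) * u := by
    have h1 : ∀ i ∈ (Finset.range k).erase j, (m i : ℝ) * x' i = (m i : ℝ) * x i :=
      fun i hi => by rw [hx'l i (Finset.mem_erase.mp hi).1]
    rw [← Finset.sum_erase_add (Finset.range k) (fun i => (m i : ℝ) * x' i) (Finset.mem_range.mpr hj),
      ← Finset.sum_erase_add (Finset.range k) (fun i => (m i : ℝ) * x i) (Finset.mem_range.mpr hj),
      Finset.sum_congr rfl h1, hx'j]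
    ring
  rw [hSum2] at hs2
  have key : (d:ℝ) * ((∑ i ∈ Finset.range (d-1), η i) - ∑ i ∈ Finset.range (d-1), ξ i)
      = ((d:ℝ) - 1) * (m j : ℝ) * u := by
    linear_combination hs2 - hs1
  rw [Finset.sum_sub_distrib, eq_div_iff (ne_of_gt hd')]
  linear_combination key

end MainThm
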